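/- Let k ≥ 3 and let p be a multilinear polynomial over GF(2) in the variables x₁,…,x_k (each variable occurring with individual degree at most 1) whose total degree is at least 3. Then there exist three distinct indices i, j, l ∈ {1,…,k} and constants c_m ∈ GF(2) for every m ∉ {i,j,l} such that the polynomial obtained from p by substituting x_m := c_m for all m ∉ {i,j,l} is a multilinear polynomial in the variables x_i, x_j, x_l of total degree exactly 3; in particular, it contains the monomial x_i·x_j·x_l with coefficient 1. -/

import Mathlib

open MvPolynomial

noncomputable def indF {k : ℕ} (t : Finset (Fin k)) : Fin k →₀ ℕ :=
  ∑ a ∈ t, Finsupp.single a 1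

lemma indF_apply {k : ℕ} (t : Finset (Fin k)) (a : Fin k) :
    indF t a = if a ∈ t then 1 else 0 := by
  classical
  rw [indF, Finset.sum_apply']
  simp [Finsupp.single_apply]

lemma indF_support {k : ℕ} (t : Finset (Fin k)) : (indF t).support = t := by
  ext a
  simp only [Finsupp.mem_support_iff, indF_apply]
  split <;> simp_all

lemma indF_deg {k : ℕ} (t : Finset (Fin k)) :
    ((indF t).sum fun _ e => e) = t.card := by
  rw [Finsupp.sum, indF_support, Finset.card_eq_sum_ones]
  exact Finset.sum_congr rfl fun a ha => by simp [indF_apply, ha]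

lemma monomial_indF {k : ℕ} (t : Finset (Fin k)) (c : ZMod 2) :
    (monomial (indF t) c : MvPolynomial (Fin k) (ZMod 2)) = C c * ∏ a ∈ t, X a := by
  classical
  induction t using Finset.induction with
  | empty => simp [indF]
  | insert _ _ h ih =>
    rw [Finset.prod_insert h, indF, Finset.sum_insert h, ← indF,
      monomial_single_add, ih]
    ring

/-- Pinning a high-degree multilinear polynomial over `GF(2)` down to three
variables while keeping a cubic term. -/
theorem multilinear_degree_three_restriction
    (k : ℕ) (hk : 3 ≤ k) (p : MvPolynomial (Fin k) (ZMod 2))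
    (hml : ∀ m ∈ p.support, ∀ i, m i ≤ 1)
    (hdeg : 3 ≤ p.totalDegree) :
    ∃ i j l : Fin k, i ≠ j ∧ i ≠ l ∧ j ≠ l ∧
      ∃ c : Fin k → ZMod 2,
        ∃ q : MvPolynomial (Fin k) (ZMod 2),
          q = MvPolynomial.bind₁
                (fun m => if m = i ∨ m = j ∨ m = l then (MvPolynomial.X m)
                          else MvPolynomial.C (c m)) p ∧
          (∀ m ∈ q.support, ∀ a, m a ≤ 1) ∧
          q.vars ⊆ {i, j, l} ∧
          q.totalDegree = 3 ∧
          q.coeff (Finsupp.single i 1 + Finsupp.single j 1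
            + Finsupp.single l 1) = 1 := by
  classical
  have hone : ∀ m ∈ p.support, ∀ a ∈ m.support, m a = 1 := by
    intro m hm a ha
    have h1 := hml m hm a
    have h2 : m a ≠ 0 := Finsupp.mem_support_iff.mp ha
    omega
  have heq_ind : ∀ m ∈ p.support, m = indF m.support := by
    intro m hm
    ext a
    rw [indF_apply]
    split
    · exact hone m hm a ‹_›
    · exact Finsupp.notMem_support_iff.mp ‹_›
  have hdc : ∀ m ∈ p.support, (m.sum fun _ e => e) = m.support.card := by
    intro m hm
    rw [Finsupp.sum, Finset.card_eq_sum_ones]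
    exact Finset.sum_congr rfl fun a ha => hone m hm a ha
  have hne : (p.support.filter fun m => 3 ≤ m.sum fun _ e => e).Nonempty := by
    rw [MvPolynomial.totalDegree] at hdeg
    obtain ⟨m, hm, h3⟩ := (Finset.le_sup_iff (by norm_num)).mp hdeg
    exact ⟨m, Finset.mem_filter.mpr ⟨hm, h3⟩⟩
  obtain ⟨T, hT, hTmin⟩ :=
    Finset.exists_min_image _ (fun m => m.sum fun _ e => e) hne
  rw [Finset.mem_filter] at hT
  obtain ⟨hTp, hT3⟩ := hT
  set S := T.support with hS
  have hScard : 3 ≤ S.card := by rw [← hdc T hTp]; exact hT3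
  obtain ⟨t, htS, htcard⟩ := Finset.exists_subset_card_eq hScard
  obtain ⟨i, j, l, hij, hil, hjl, rfl⟩ := Finset.card_eq_three.mp htcard
  have hiS : i ∈ S := htS (by simp)
  have hjS : j ∈ S := htS (by simp)
  have hlS : l ∈ S := htS (by simp)
  set c : Fin k → ZMod 2 := fun m => if m ∈ S then 1 else 0 with hc
  set f : Fin k → MvPolynomial (Fin k) (ZMod 2) :=
    fun m => if m = i ∨ m = j ∨ m = l then X m else C (c m) with hf
  set q := bind₁ f p with hqdef
  -- expansion of q
  have hq : q = ∑ m' ∈ p.support,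
      if m'.support ⊆ S then
        monomial (indF (m'.support.filter fun a => a = i ∨ a = j ∨ a = l))
          (coeff m' p)
      else 0 := by
    rw [hqdef]
    conv_lhs => rw [← p.support_sum_monomial_coeff]
    rw [map_sum]
    refine Finset.sum_congr rfl fun m' hm' => ?_
    rw [bind₁_monomial]
    have hprod : (∏ a ∈ m'.support, f a ^ m' a) = ∏ a ∈ m'.support, f a :=
      Finset.prod_congr rfl fun a ha => by rw [hone m' hm' a ha, pow_one]
    rw [hprod]
    by_cases hsub : m'.support ⊆ S
    · rw [if_pos hsub, monomial_indF, Finset.prod_filter]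
      congr 1
      refine Finset.prod_congr rfl fun a ha => ?_
      by_cases hP : a = i ∨ a = j ∨ a = l
      · rw [hf]; simp only [if_pos hP]
      · rw [hf]; simp only [if_neg hP]
        rw [hc]; simp only [if_pos (hsub ha), map_one]
    · rw [if_neg hsub]
      obtain ⟨a, ha, haS⟩ := Finset.not_subset.mp hsub
      have hP : ¬(a = i ∨ a = j ∨ a = l) := by
        rintro (rfl | rfl | rfl) <;> exact haS ‹_›
      have hfa : f a = 0 := by
        rw [hf]; simp only [if_neg hP]
        rw [hc]; simp only [if_neg haS, map_zero]
      rw [Finset.prod_eq_zero ha hfa, mul_zero]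
  have hcoeff : ∀ μ, coeff μ q = ∑ m' ∈ p.support,
      if m'.support ⊆ S ∧
          indF (m'.support.filter fun a => a = i ∨ a = j ∨ a = l) = μ then
        coeff m' p
      else 0 := by
    intro μ
    rw [hq, coeff_sum]
    refine Finset.sum_congr rfl fun m' hm' => ?_
    by_cases h1 : m'.support ⊆ S
    · rw [if_pos h1, coeff_monomial]
      by_cases h2 : indF (m'.support.filter fun a => a = i ∨ a = j ∨ a = l) = μ
      · rw [if_pos h2, if_pos ⟨h1, h2⟩]
      · rw [if_neg h2, if_neg (by tauto)]
    · rw [if_neg h1, if_neg (by tauto), coeff_zero]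
  have hmem : ∀ μ ∈ q.support, ∃ m' ∈ p.support, m'.support ⊆ S ∧
      μ = indF (m'.support.filter fun a => a = i ∨ a = j ∨ a = l) := by
    intro μ hμ
    have h0 : coeff μ q ≠ 0 := mem_support_iff.mp hμ
    rw [hcoeff μ] at h0
    obtain ⟨m', hm', hne0⟩ := Finset.exists_ne_zero_of_sum_ne_zero h0
    by_cases h1 : m'.support ⊆ S ∧
        indF (m'.support.filter fun a => a = i ∨ a = j ∨ a = l) = μ
    · exact ⟨m', hm', h1.1, h1.2.symm⟩
    · rw [if_neg h1] at hne0; exact absurd rfl hne0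
  have he3 : Finsupp.single i 1 + Finsupp.single j 1 + Finsupp.single l 1 =
      indF {i, j, l} := by
    rw [indF, Finset.sum_insert (by simp [hij, hil]),
      Finset.sum_insert (by simp [hjl]), Finset.sum_singleton, add_assoc]
  have hkey : ∀ m' ∈ p.support,
      ((m'.support ⊆ S ∧
        indF (m'.support.filter fun a => a = i ∨ a = j ∨ a = l) =
          indF {i, j, l}) ↔ m' = T) := by
    intro m' hm'
    constructor
    · rintro ⟨hsub, hind⟩
      have hfeq : (m'.support.filter fun a => a = i ∨ a = j ∨ a = l) =
          {i, j, l} := by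
        have h := congrArg Finsupp.support hind
        rwa [indF_support, indF_support] at h
      have hsub3 : ({i, j, l} : Finset (Fin k)) ⊆ m'.support := by
        rw [← hfeq]; exact Finset.filter_subset _ _
      have h3m : 3 ≤ m'.support.card := htcard ▸ Finset.card_le_card hsub3
      have hm'f : m' ∈ p.support.filter fun m => 3 ≤ m.sum fun _ e => e :=
        Finset.mem_filter.mpr ⟨hm', by rw [hdc m' hm']; exact h3m⟩
      have hcardle : S.card ≤ m'.support.card := by
        rw [← hdc T hTp, ← hdc m' hm']; exact hTmin m' hm'f
      have hsupeq : m'.support = S := Finset.eq_of_subset_of_card_le hsub hcardle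
      rw [heq_ind m' hm', heq_ind T hTp, hsupeq, ← hS]
    · rintro rfl
      refine ⟨subset_rfl, ?_⟩
      congr 1
      apply Finset.Subset.antisymm
      · intro a ha
        rcases (Finset.mem_filter.mp ha).2 with rfl | rfl | rfl <;> simp
      · intro a ha
        refine Finset.mem_filter.mpr ⟨htS ha, ?_⟩
        simpa using ha
  have hce3 : coeff (indF {i, j, l}) q = coeff T p := by
    rw [hcoeff]
    rw [Finset.sum_eq_single T]
    · rw [if_pos ((hkey T hTp).mpr rfl)]
    · intro m' hm' hne'
      rw [if_neg]
      intro hcond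
      exact hne' ((hkey m' hm').mp hcond)
    · intro h; exact absurd hTp h
  have hcT : coeff T p = 1 := by
    have h0 : coeff T p ≠ 0 := mem_support_iff.mp hTp
    have h1 : ∀ x : ZMod 2, x ≠ 0 → x = 1 := by decide
    exact h1 _ h0
  refine ⟨i, j, l, hij, hil, hjl, c, q, rfl, ?_, ?_, ?_, ?_⟩
  · -- multilinear
    intro μ hμ a
    obtain ⟨m', _, _, rfl⟩ := hmem μ hμ
    rw [indF_apply]
    split <;> omega
  · -- vars
    intro a ha
    rw [mem_vars] at ha
    obtain ⟨μ, hμ, haμ⟩ := ha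
    obtain ⟨m', _, _, rfl⟩ := hmem μ hμ
    rw [indF_support] at haμ
    rcases (Finset.mem_filter.mp haμ).2 with rfl | rfl | rfl <;> simp
  · -- total degree
    apply le_antisymm
    · rw [MvPolynomial.totalDegree]
      apply Finset.sup_le
      intro μ hμ
      obtain ⟨m', _, _, rfl⟩ := hmem μ hμ
      rw [indF_deg]
      have hsub : (m'.support.filter fun a => a = i ∨ a = j ∨ a = l) ⊆
          {i, j, l} := by
        intro a ha
        rcases (Finset.mem_filter.mp ha).2 with rfl | rfl | rfl <;> simp
      calc (m'.support.filter fun a => a = i ∨ a = j ∨ a = l).card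
          ≤ ({i, j, l} : Finset (Fin k)).card := Finset.card_le_card hsub
        _ = 3 := htcard
    · have hmem3 : indF {i, j, l} ∈ q.support :=
        mem_support_iff.mpr (by rw [hce3, hcT]; exact one_ne_zero)
      have h := le_totalDegree hmem3
      rwa [indF_deg, htcard] at h
  · rw [he3, hce3, hcT]
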